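/- Let φ₁ : C → ℝ be a convex function on a convex set C ⊆ ℝ^p with minimizer θ₁ ∈ C. Let Ψ : C → ℝ be convex such that φ₂ = φ₁ + Ψ is 1-strongly convex with respect to the ℓ₂ norm, and let θ₂ ∈ C be a minimizer of φ₂. Then for any subgradient b of Ψ at θ₁, we have ‖θ₁ − θ₂‖₂ ≤ ‖b‖₂. -/

import Mathlib

open RealInnerProductSpace

/-- A 1-strongly convex function dominates its minimum plus half the squared distance. -/
lemma strong_min_aux {E : Type*} [NormedAddCommGroup E] [NormedSpace ℝ E]
    {C : Set E} {f : E → ℝ} (hf : StrongConvexOn C 1 f)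
    {x y : E} (hx : x ∈ C) (hy : y ∈ C) (hmin : ∀ z ∈ C, f x ≤ f z) :
    f x + 1 / 2 * ‖y - x‖ ^ 2 ≤ f y := by
  set d2 := ‖y - x‖ ^ 2 with hd2
  have hd2nn : 0 ≤ d2 := by positivity
  have key : ∀ t : ℝ, 0 < t → t ≤ 1 → (1 - t) / 2 * d2 ≤ f y - f x := by
    intro t ht ht1
    have hsum : t + (1 - t) = 1 := by ring
    have hconv := hf.2 hy hx ht.le (by linarith) hsum
    have hmem : t • y + (1 - t) • x ∈ C := hf.1 hy hx ht.le (by linarith) hsum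
    have hm := hmin _ hmem
    simp only [smul_eq_mul] at hconv
    have h2 : t * ((1 - t) / 2 * d2) ≤ t * (f y - f x) := by rw [hd2]; nlinarith
    exact le_of_mul_le_mul_left h2 ht
  by_contra hcon
  push_neg at hcon
  have h1 : 0 ≤ f y - f x := by have := key 1 one_pos le_rfl; linarith
  have hg : 0 < 1 / 2 * d2 - (f y - f x) := by linarith
  set g := 1 / 2 * d2 - (f y - f x) with hgdef
  have hd2pos : 0 < d2 := by nlinarith
  have ht : 0 < g / d2 := div_pos hg hd2pos
  have ht1 : min 1 (g / d2) ≤ 1 := min_le_left _ _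
  have := key (min 1 (g / d2)) (lt_min one_pos ht) ht1
  have hle : min 1 (g / d2) ≤ g / d2 := min_le_right _ _
  have : (1 - g / d2) / 2 * d2 ≤ f y - f x := by
    calc (1 - g / d2) / 2 * d2 ≤ (1 - min 1 (g / d2)) / 2 * d2 := by nlinarith
    _ ≤ f y - f x := this
  have hdiv : g / d2 * d2 = g := div_mul_cancel₀ _ hd2pos.ne'
  nlinarith

/-- Perturbation lemma (Lemma 7 of McMahan'17, restated): if `φ₁` is convex on `C` with
minimizer `θ₁`, `Ψ` is convex with subgradient `b` at `θ₁`, and `φ₂ = φ₁ + Ψ` is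
1-strongly convex on `C` with minimizer `θ₂`, then `‖θ₁ - θ₂‖ ≤ ‖b‖`. -/
theorem perturbation_lemma {p : ℕ} (C : Set (EuclideanSpace ℝ (Fin p)))
    (hC : Convex ℝ C)
    (φ₁ Ψ : EuclideanSpace ℝ (Fin p) → ℝ)
    (hφ₁ : ConvexOn ℝ C φ₁) (hΨ : ConvexOn ℝ C Ψ)
    (hφ₂ : StrongConvexOn C 1 (fun θ => φ₁ θ + Ψ θ))
    (θ₁ θ₂ : EuclideanSpace ℝ (Fin p))
    (hθ₁C : θ₁ ∈ C) (hθ₁min : ∀ y ∈ C, φ₁ θ₁ ≤ φ₁ y)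
    (hθ₂C : θ₂ ∈ C) (hθ₂min : ∀ y ∈ C, φ₁ θ₂ + Ψ θ₂ ≤ φ₁ y + Ψ y)
    (b : EuclideanSpace ℝ (Fin p))
    (hb : ∀ y ∈ C, Ψ θ₁ + ⟪b, y - θ₁⟫ ≤ Ψ y) :
    ‖θ₁ - θ₂‖ ≤ ‖b‖ := by
  set h : EuclideanSpace ℝ (Fin p) → ℝ := fun θ => φ₁ θ + Ψ θ - ⟪b, θ⟫ with hhdef
  -- h is 1-strongly convex
  have hh : StrongConvexOn C 1 h := by
    refine ⟨hφ₂.1, fun x hx y hy a c ha hc hac => ?_⟩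
    have := hφ₂.2 hx hy ha hc hac
    simp only [hhdef, smul_eq_mul] at this ⊢
    have hinner : ⟪b, a • x + c • y⟫ = a * ⟪b, x⟫ + c * ⟪b, y⟫ := by
      rw [inner_add_right, real_inner_smul_right, real_inner_smul_right]
    rw [hinner]
    linarith
  -- θ₁ minimizes h on C
  have hminh : ∀ z ∈ C, h θ₁ ≤ h z := by
    intro z hz
    have h1 := hθ₁min z hz
    have h2 := hb z hz
    rw [inner_sub_right] at h2
    simp only [hhdef]
    linarith
  have key1 := strong_min_aux hφ₂ hθ₂C hθ₁C hθ₂min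
  have key2 := strong_min_aux hh hθ₁C hθ₂C hminh
  simp only [hhdef] at key1 key2
  have hrev : ‖θ₂ - θ₁‖ = ‖θ₁ - θ₂‖ := norm_sub_rev _ _
  rw [hrev] at key2
  have hinner : ⟪b, θ₁⟫ - ⟪b, θ₂⟫ ≤ ‖b‖ * ‖θ₁ - θ₂‖ := by
    have := real_inner_le_norm b (θ₁ - θ₂)
    rwa [inner_sub_right] at this
  have hsq : ‖θ₁ - θ₂‖ ^ 2 ≤ ‖b‖ * ‖θ₁ - θ₂‖ := by linarith
  rcases eq_or_lt_of_le (norm_nonneg (θ₁ - θ₂)) with h0 | h0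
  · rw [← h0]; exact norm_nonneg b
  · nlinarith
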